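/- For every natural number n there exist constants C > 0 and λ₀ > 0 such that for all real λ ≥ λ₀, the tail sum satisfies ∑_{l > λ−√λ} l^n/D_λ(l) ≤ C·λ^n, where the (convergent) sum runs over all natural numbers l with l > λ − √λ. -/

import Mathlib

set_option maxHeartbeats 1000000

open Finset

/-- `D lam l = ∑_{k=0}^{l} l! / ((l-k)! * lam^k)`. -/
noncomputable def D (lam : ℝ) (l : ℕ) : ℝ :=
  ∑ k ∈ Finset.range (l + 1),
    (Nat.factorial l : ℝ) / ((Nat.factorial (l - k) : ℝ) * lam ^ k)

namespace TailAux

/-- `t lam l = lam^l / l!` -/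
noncomputable def t (lam : ℝ) (l : ℕ) : ℝ := lam ^ l / (Nat.factorial l : ℝ)

/-- partial exponential sum -/
noncomputable def S (lam : ℝ) (l : ℕ) : ℝ :=
  ∑ j ∈ Finset.range (l + 1), t lam j

lemma t_pos {lam : ℝ} (h : 0 < lam) (l : ℕ) : 0 < t lam l := by
  unfold t; positivity

lemma S_pos {lam : ℝ} (h : 0 < lam) (l : ℕ) : 0 < S lam l := by
  unfold S
  refine Finset.sum_pos (fun j _ => t_pos h j) ⟨0, by simp⟩

lemma S_mono {lam : ℝ} (h : 0 < lam) {a b : ℕ} (hab : a ≤ b) : S lam a ≤ S lam b := by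
  unfold S
  refine Finset.sum_le_sum_of_subset_of_nonneg ?_ (fun j _ _ => (t_pos h j).le)
  exact Finset.range_subset_range.mpr (by omega)

lemma D_mul_t {lam : ℝ} (h : 0 < lam) (l : ℕ) : D lam l * t lam l = S lam l := by
  unfold D S t
  rw [Finset.sum_mul]
  rw [← Finset.sum_range_reflect (fun j => lam ^ j / (Nat.factorial j : ℝ)) (l + 1)]
  refine Finset.sum_congr rfl (fun k hk => ?_)
  have hkl : k ≤ l := by simpa [Nat.lt_succ_iff] using hk
  have h1 : l + 1 - 1 - k = l - k := by omega
  rw [h1]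
  have hfl : (0:ℝ) < (Nat.factorial l : ℝ) := by positivity
  have hflk : (0:ℝ) < (Nat.factorial (l - k) : ℝ) := by positivity
  have hpow : lam ^ (l - k) * lam ^ k = lam ^ l := by
    rw [← pow_add]; congr 1; omega
  field_simp
  rw [← hpow]; ring

lemma D_pos {lam : ℝ} (h : 0 < lam) (l : ℕ) : 0 < D lam l := by
  have := D_mul_t h l
  have ht := t_pos h l
  have hS := S_pos h l
  nlinarith

/-- `(a+1)^(b-a) * a! ≤ b!` -/
lemma fact_ratio {a b : ℕ} (h : a ≤ b) :
    ((a : ℝ) + 1) ^ (b - a) * (Nat.factorial a : ℝ) ≤ (Nat.factorial b : ℝ) := by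
  have := Nat.factorial_mul_pow_le_factorial (m := a) (n := b - a)
  have hb : a + (b - a) = b := by omega
  rw [hb] at this
  calc ((a : ℝ) + 1) ^ (b - a) * (Nat.factorial a : ℝ)
      = ((Nat.factorial a * (a+1) ^ (b-a) : ℕ) : ℝ) := by push_cast; ring
    _ ≤ ((Nat.factorial b : ℕ) : ℝ) := by exact_mod_cast Nat.cast_le.mpr this

/-- `exp (-2y) ≤ 1 - y` for `0 ≤ y ≤ 1/2`. -/
lemma exp_neg_le {y : ℝ} (h0 : 0 ≤ y) (h1 : y ≤ 1/2) : Real.exp (-(2*y)) ≤ 1 - y := by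
  have h2 : (2*y) + 1 ≤ Real.exp (2*y) := Real.add_one_le_exp _
  have h3 : Real.exp (-(2*y)) = 1 / Real.exp (2*y) := by
    rw [Real.exp_neg]; ring
  rw [h3]
  have hpos : (0:ℝ) < 1 + 2*y := by linarith
  have : 1 / Real.exp (2*y) ≤ 1 / (1 + 2*y) := by
    apply div_le_div_of_nonneg_left (by norm_num) hpos (by linarith)
  refine this.trans ?_
  rw [div_le_iff₀ hpos]
  nlinarith

end TailAux

namespace TailAux

lemma sqrt_facts {lam : ℝ} (hlam : 100 ≤ lam) :
    10 ≤ Real.sqrt lam ∧ Real.sqrt lam * Real.sqrt lam = lam := by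
  constructor
  · have h10 : Real.sqrt 100 = 10 := by
      rw [show (100:ℝ) = 10^2 by norm_num, Real.sqrt_sq (by norm_num)]
    calc (10:ℝ) = Real.sqrt 100 := h10.symm
      _ ≤ Real.sqrt lam := Real.sqrt_le_sqrt hlam
  · exact Real.mul_self_sqrt (by linarith)

lemma window {lam : ℝ} (hlam : 100 ≤ lam) {L : ℕ}
    (h1 : lam - Real.sqrt lam < L) (h2 : (L : ℝ) ≤ lam + Real.sqrt lam + 1) :
    Real.exp (-4) * Real.sqrt lam * t lam L ≤ S lam L := by
  obtain ⟨hs10, hss⟩ := sqrt_facts hlam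
  set s := Real.sqrt lam with hsdef
  have hs0 : 0 < s := by linarith
  have hlam0 : 0 < lam := by linarith
  set m := ⌊s⌋₊ with hmdef
  have hms : (m : ℝ) ≤ s := Nat.floor_le hs0.le
  have hsm1 : s < (m : ℝ) + 1 := Nat.lt_floor_add_one s
  have hmL : m ≤ L := by
    have h : (m : ℝ) < (L : ℝ) := by nlinarith
    exact_mod_cast h.le
  -- each t j for j in [L-m, L] is at least exp(-4) * t L
  have hterm : ∀ j ∈ Finset.Icc (L - m) L, Real.exp (-4) * t lam L ≤ t lam j := by
    intro j hj
    rw [Finset.mem_Icc] at hj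
    obtain ⟨hj1, hj2⟩ := hj
    have hjR : (L : ℝ) - (m : ℝ) ≤ (j : ℝ) := by
      have : ((L - m : ℕ) : ℝ) ≤ (j : ℝ) := Nat.cast_le.mpr hj1
      rwa [Nat.cast_sub hmL] at this
    -- (j+1)/lam ≥ 1 - 2/s
    have hx0 : (0:ℝ) ≤ 1 - 2/s := by
      have : 2/s ≤ 2/10 := by apply div_le_div_of_nonneg_left (by norm_num) (by norm_num) hs10
      linarith
    have hx1 : 1 - 2/s ≤ 1 := by
      have : 0 ≤ 2/s := by positivity
      linarith
    have hjlam : (1 - 2/s) * lam ≤ (j : ℝ) + 1 := by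
      have h2s : (1 - 2/s) * lam = lam - 2*s := by
        field_simp
        nlinarith
      rw [h2s]
      nlinarith
    -- key chain: exp(-4) ≤ ((j+1)/lam)^(L-j)
    have hLj : L - j ≤ m := by omega
    have hexp4 : Real.exp (-4) ≤ (1 - 2/s) ^ (L - j) := by
      have hy : Real.exp (-(2*(2/s))) ≤ 1 - 2/s := by
        apply exp_neg_le (by positivity)
        rw [div_le_iff₀ hs0]; linarith
      have hpow : Real.exp (-(2*(2/s))) ^ m ≤ (1 - 2/s) ^ m :=
        pow_le_pow_left₀ (Real.exp_pos _).le hy m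
      have hem : Real.exp (-(2*(2/s))) ^ m = Real.exp ((m:ℝ) * (-(4/s))) := by
        rw [← Real.exp_nat_mul]; ring_nf
      have h4 : Real.exp (-4) ≤ Real.exp ((m:ℝ) * (-(4/s))) := by
        apply Real.exp_le_exp.mpr
        have hh : (m:ℝ) * (4/s) ≤ 4 := by
          have he : (m:ℝ) * (4/s) = 4 * m / s := by ring
          rw [he, div_le_iff₀ hs0]; nlinarith
        have he2 : (m:ℝ) * (-(4/s)) = -((m:ℝ) * (4/s)) := by ring
        rw [he2]; linarith
      have hmono : (1 - 2/s) ^ m ≤ (1 - 2/s) ^ (L - j) :=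
        pow_le_pow_of_le_one hx0 (by nlinarith [hx0]) hLj
      calc Real.exp (-4) ≤ Real.exp ((m:ℝ) * (-(4/s))) := h4
        _ = Real.exp (-(2*(2/s))) ^ m := hem.symm
        _ ≤ (1 - 2/s) ^ m := hpow
        _ ≤ (1 - 2/s) ^ (L - j) := hmono
    -- t L ≤ ((lam/(j+1))^(L-j)) t j ; equivalently
    -- t lam j ≥ ((j+1)/lam)^(L-j) * t lam L
    have hfact : ((j : ℝ) + 1) ^ (L - j) * (Nat.factorial j : ℝ) ≤ (Nat.factorial L : ℝ) :=
      fact_ratio hj2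
    have htj : ((j:ℝ)+1) ^ (L - j) / lam ^ (L - j) * t lam L ≤ t lam j := by
      unfold t
      have hfj : (0:ℝ) < (Nat.factorial j : ℝ) := by positivity
      have hfL : (0:ℝ) < (Nat.factorial L : ℝ) := by positivity
      have hplam : lam ^ (L - j) * lam ^ j = lam ^ L := by
        rw [← pow_add]; congr 1; omega
      rw [div_mul_div_comm, div_le_div_iff₀ (by positivity) (by positivity)]
      calc ((j:ℝ)+1) ^ (L-j) * lam ^ L * (Nat.factorial j : ℝ)
          = (((j:ℝ)+1) ^ (L-j) * (Nat.factorial j : ℝ)) * lam ^ L := by ring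
        _ ≤ (Nat.factorial L : ℝ) * lam ^ L := by
            apply mul_le_mul_of_nonneg_right hfact (by positivity)
        _ = lam ^ j * (lam ^ (L - j) * (Nat.factorial L : ℝ)) := by
            rw [← hplam]; ring
    have hratio : Real.exp (-4) ≤ ((j:ℝ)+1) ^ (L - j) / lam ^ (L - j) := by
      have : (1 - 2/s) ^ (L - j) ≤ ((j:ℝ)+1) ^ (L - j) / lam ^ (L - j) := by
        rw [le_div_iff₀ (by positivity)]
        calc (1 - 2/s) ^ (L-j) * lam ^ (L-j) = ((1 - 2/s) * lam) ^ (L-j) :=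
              (mul_pow _ _ _).symm
          _ ≤ ((j:ℝ)+1) ^ (L-j) :=
              pow_le_pow_left₀ (mul_nonneg hx0 hlam0.le) hjlam _
      linarith [hexp4]
    calc Real.exp (-4) * t lam L
        ≤ (((j:ℝ)+1) ^ (L - j) / lam ^ (L - j)) * t lam L := by
          apply mul_le_mul_of_nonneg_right hratio (t_pos hlam0 L).le
      _ ≤ t lam j := htj
  -- sum over the interval
  have hsubset : Finset.Icc (L - m) L ⊆ Finset.range (L + 1) := by
    intro j hj
    rw [Finset.mem_Icc] at hj
    rw [Finset.mem_range]
    omega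
  have hsum : ∑ j ∈ Finset.Icc (L - m) L, t lam j ≤ S lam L := by
    unfold S
    exact Finset.sum_le_sum_of_subset_of_nonneg hsubset (fun j _ _ => (t_pos hlam0 j).le)
  have hcard : (Finset.Icc (L - m) L).card = m + 1 := by
    rw [Nat.card_Icc]; omega
  have hlow : ((m:ℝ) + 1) * (Real.exp (-4) * t lam L) ≤ ∑ j ∈ Finset.Icc (L - m) L, t lam j := by
    have := Finset.card_nsmul_le_sum (Finset.Icc (L - m) L) (t lam) (Real.exp (-4) * t lam L) hterm
    rw [hcard] at this
    simpa [nsmul_eq_mul, Nat.cast_add] using this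
  have : Real.exp (-4) * s * t lam L ≤ ((m:ℝ)+1) * (Real.exp (-4) * t lam L) := by
    have ht := (t_pos hlam0 L).le
    have he := (Real.exp_pos (-4)).le
    nlinarith [mul_nonneg (mul_nonneg he ht) (by linarith : (0:ℝ) ≤ (m:ℝ) + 1 - s)]
  linarith

end TailAux

namespace TailAux

lemma key {lam : ℝ} (hlam : 100 ≤ lam) {l : ℕ} (hl : lam - Real.sqrt lam < l) :
    1 / D lam l ≤ (Real.exp 4 / Real.sqrt lam) *
      (lam / (lam + Real.sqrt lam)) ^ (l - ⌈lam + Real.sqrt lam⌉₊) := by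
  obtain ⟨hs10, hss⟩ := sqrt_facts hlam
  set s := Real.sqrt lam with hsdef
  have hs0 : 0 < s := by linarith
  have hlam0 : 0 < lam := by linarith
  set M := ⌈lam + s⌉₊ with hMdef
  have hMge : lam + s ≤ (M : ℝ) := Nat.le_ceil _
  have hMlt : (M : ℝ) < lam + s + 1 := Nat.ceil_lt_add_one (by linarith)
  set r := lam / (lam + s) with hrdef
  have hr0 : 0 < r := by positivity
  have hr1 : r < 1 := by
    rw [hrdef, div_lt_one (by linarith)]; linarith
  have hDpos := D_pos hlam0 l
  have h1D : 1 / D lam l = t lam l / S lam l := by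
    rw [← D_mul_t hlam0 l]
    rw [div_mul_eq_div_div_swap]
    congr 1
    rw [div_self (t_pos hlam0 l).ne']
  rcases le_or_gt l M with hlM | hlM
  · -- window case
    have hexp : l - M = 0 := by omega
    rw [hexp, pow_zero, mul_one, h1D]
    have hW := window hlam hl (by
      calc (l:ℝ) ≤ (M:ℝ) := Nat.cast_le.mpr hlM
        _ ≤ lam + s + 1 := hMlt.le)
    have htl := t_pos hlam0 l
    have hSl := S_pos hlam0 l
    rw [div_le_div_iff₀ hSl (by positivity : (0:ℝ) < s)]
    have he4 : Real.exp 4 * Real.exp (-4) = 1 := by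
      rw [← Real.exp_add]; norm_num
    nlinarith [hW, htl, Real.exp_pos (4:ℝ), Real.exp_pos (-4:ℝ)]
  · -- geometric decay case
    have hMl : M ≤ l := hlM.le
    have hW := window hlam (show lam - s < (M:ℝ) by linarith) (by linarith)
    have htM := t_pos hlam0 M
    have htl := t_pos hlam0 l
    have hSl := S_pos hlam0 l
    have hSM := S_pos hlam0 M
    -- t lam l ≤ t lam M * r^(l-M)
    have hfact : ((M : ℝ) + 1) ^ (l - M) * (Nat.factorial M : ℝ) ≤ (Nat.factorial l : ℝ) :=
      fact_ratio hMl
    have hplam : lam ^ (l - M) * lam ^ M = lam ^ l := by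
      rw [← pow_add]; congr 1; omega
    have htlM : t lam l ≤ t lam M * r ^ (l - M) := by
      have step1 : t lam l ≤ t lam M * (lam / ((M:ℝ)+1)) ^ (l - M) := by
        unfold t
        rw [div_pow, div_mul_div_comm, div_le_div_iff₀ (by positivity) (by positivity)]
        calc lam ^ l * ((Nat.factorial M : ℝ) * ((M:ℝ)+1) ^ (l - M))
            = (((M:ℝ)+1) ^ (l - M) * (Nat.factorial M : ℝ)) * lam ^ l := by ring
          _ ≤ (Nat.factorial l : ℝ) * lam ^ l := by
              apply mul_le_mul_of_nonneg_right hfact (by positivity)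
          _ = lam ^ M * lam ^ (l - M) * (Nat.factorial l : ℝ) := by
              rw [← hplam]; ring
      refine step1.trans ?_
      apply mul_le_mul_of_nonneg_left _ htM.le
      apply pow_le_pow_left₀ (by positivity)
      apply div_le_div_of_nonneg_left hlam0.le (by linarith)
      linarith
    -- S lam l ≥ S lam M ≥ exp(-4) s t lam M
    have hSge : Real.exp (-4) * s * t lam M ≤ S lam l :=
      hW.trans (S_mono hlam0 hMl)
    rw [h1D]
    calc t lam l / S lam l ≤ (t lam M * r ^ (l - M)) / (Real.exp (-4) * s * t lam M) := by
          exact div_le_div₀ (mul_nonneg htM.le (pow_nonneg hr0.le _)) htlM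
            (mul_pos (mul_pos (Real.exp_pos _) hs0) htM) hSge
      _ = (Real.exp 4 / s) * r ^ (l - M) := by
          have he4 : Real.exp (-4) = (Real.exp 4)⁻¹ := by
            rw [← Real.exp_neg]
          rw [he4]
          field_simp

lemma sum_pow_geom (n : ℕ) : ∃ K > (0:ℝ), ∀ r : ℝ, 0 < r → r < 1 →
    Summable (fun j : ℕ => (j:ℝ)^n * r^j) ∧
    ∑' j : ℕ, (j:ℝ)^n * r^j ≤ K / (1 - r)^(2*n+1) := by
  rcases Nat.eq_zero_or_pos n with hn | hn
  · subst hn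
    refine ⟨1, one_pos, fun r hr0 hr1 => ?_⟩
    have h1r0 : 0 < 1 - r := by linarith
    have hsum : Summable (fun j : ℕ => (j:ℝ)^0 * r^j) := by
      simpa using summable_geometric_of_lt_one hr0.le hr1
    refine ⟨hsum, ?_⟩
    have hts : ∑' j : ℕ, (j:ℝ)^0 * r^j = (1-r)⁻¹ := by
      simpa using tsum_geometric_of_lt_one hr0.le hr1
    rw [hts, inv_eq_one_div]
    norm_num
  · set m := n + 2 with hm
    have hP : Summable (fun j : ℕ => 1 / ((j:ℝ)+1)^2) := by
      have h2 : Summable (fun j : ℕ => 1 / ((j:ℝ))^2) :=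
        Real.summable_one_div_nat_pow.mpr one_lt_two
      have h3 := (summable_nat_add_iff 1).mpr h2
      refine h3.congr (fun j => ?_)
      push_cast
      ring
    set P := ∑' j : ℕ, 1 / ((j:ℝ)+1)^2 with hPdef
    have hP0 : 0 < P := Summable.tsum_pos hP (fun j => by positivity) 0 (by norm_num)
    have hA0 : (0:ℝ) < 4*(2*m:ℝ)^m := by positivity
    refine ⟨4*(2*m:ℝ)^m * P, by positivity, fun r hr0 hr1 => ?_⟩
    have h1r0 : 0 < 1 - r := by linarith
    have hpt : ∀ j : ℕ, (j:ℝ)^n * r^j ≤ (4*(2*m:ℝ)^m / (1-r)^(2*n+1)) * (1/((j:ℝ)+1)^2) := by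
      intro j
      have hj10 : (0:ℝ) < ((j:ℝ)+1)^2 := by positivity
      have hden : (0:ℝ) < (1-r)^(2*n+1) := by positivity
      rw [mul_one_div, le_div_iff₀ hj10, le_div_iff₀ hden]
      rcases lt_or_ge j (2*m) with hj | hj
      · -- small j
        have hjm' : j + 1 ≤ 2*m := by omega
        have hjm1 : (j:ℝ) + 1 ≤ 2*(m:ℝ) := by exact_mod_cast hjm'
        have hjm : (j:ℝ) ≤ 2*(m:ℝ) := by linarith
        have hr1' : r^j ≤ 1 := pow_le_one₀ hr0.le hr1.le
        have h1r1 : (1-r)^(2*n+1) ≤ 1 := pow_le_one₀ h1r0.le (by linarith)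
        have hjn : (j:ℝ)^n ≤ (2*(m:ℝ))^n := pow_le_pow_left₀ (by positivity) hjm n
        have hj12 : ((j:ℝ)+1)^2 ≤ (2*(m:ℝ))^2 :=
          pow_le_pow_left₀ (by positivity) hjm1 2
        have hkey : (j:ℝ)^n * ((j:ℝ)+1)^2 ≤ (2*(m:ℝ))^m := by
          calc (j:ℝ)^n * ((j:ℝ)+1)^2 ≤ (2*(m:ℝ))^n * (2*(m:ℝ))^2 := by
                apply mul_le_mul hjn hj12 (by positivity) (by positivity)
            _ = (2*(m:ℝ))^m := by rw [← pow_add]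
        have h1 : (j:ℝ)^n * r^j * ((j:ℝ)+1)^2 * (1-r)^(2*n+1)
            ≤ (j:ℝ)^n * ((j:ℝ)+1)^2 := by
          have hnn : (0:ℝ) ≤ (j:ℝ)^n * ((j:ℝ)+1)^2 := by positivity
          calc (j:ℝ)^n * r^j * ((j:ℝ)+1)^2 * (1-r)^(2*n+1)
              = ((j:ℝ)^n * ((j:ℝ)+1)^2) * (r^j * (1-r)^(2*n+1)) := by ring
            _ ≤ ((j:ℝ)^n * ((j:ℝ)+1)^2) * 1 := by
                apply mul_le_mul_of_nonneg_left _ hnn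
                calc r^j * (1-r)^(2*n+1) ≤ 1 * 1 := by
                      apply mul_le_mul hr1' h1r1 (by positivity) one_pos.le
                  _ = 1 := by ring
            _ = (j:ℝ)^n * ((j:ℝ)+1)^2 := by ring
        nlinarith [hkey]
      · -- large j : j ≥ 2m
        have hmj : m ≤ j := by omega
        have hj1 : 1 ≤ j := by omega
        set u := (1-r)/r with hu
        have hu0 : 0 ≤ u := by positivity
        -- binomial single term
        have hbin : u^m * (Nat.choose j m : ℝ) ≤ (u+1)^j := by
          rw [add_pow]
          have hmem : m ∈ Finset.range (j+1) := Finset.mem_range.mpr (by omega)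
          have := Finset.single_le_sum
            (f := fun k => u^k * 1^(j-k) * (Nat.choose j k : ℝ))
            (fun k _ => by positivity) hmem
          simpa using this
        have h1u : u + 1 = 1/r := by
          rw [hu]; field_simp; ring
        have hCur : (Nat.choose j m : ℝ) * (u^m * r^j) ≤ 1 := by
          have h2 : u^m * (Nat.choose j m : ℝ) * r^j ≤ (1/r)^j * r^j := by
            apply mul_le_mul_of_nonneg_right _ (by positivity)
            rw [← h1u]; exact hbin
          have h3 : (1/r)^j * r^j = 1 := by
            rw [div_pow, one_pow, div_mul_cancel₀]
            positivity
          calc (Nat.choose j m : ℝ) * (u^m * r^j) = u^m * (Nat.choose j m : ℝ) * r^j := by ring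
            _ ≤ 1 := by rw [← h3]; exact h2
        -- choose lower bound
        have hchoose : (j:ℝ)^m ≤ (2*(m:ℝ))^m * (Nat.choose j m : ℝ) := by
          have hnat : (j - m + 1)^m * Nat.factorial (j-m) ≤ Nat.choose j m * Nat.factorial m * Nat.factorial (j-m) := by
            have h4 := Nat.factorial_mul_pow_le_factorial (m := j - m) (n := m)
            have h5 : j - m + m = j := by omega
            rw [h5] at h4
            rw [← Nat.choose_mul_factorial_mul_factorial hmj] at h4
            calc (j - m + 1)^m * Nat.factorial (j-m)
                = Nat.factorial (j-m) * (j - m + 1)^m := by ring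
              _ ≤ Nat.choose j m * Nat.factorial m * Nat.factorial (j-m) := h4
          have hnat2 : (j - m + 1)^m ≤ Nat.choose j m * Nat.factorial m :=
            Nat.le_of_mul_le_mul_right hnat (Nat.factorial_pos _)
          have hcast : ((j - m + 1 : ℕ):ℝ)^m ≤ (Nat.choose j m : ℝ) * (Nat.factorial m : ℝ) := by
            exact_mod_cast hnat2
          have hhalf : (j:ℝ)/2 ≤ ((j - m + 1 : ℕ):ℝ) := by
            have hc : ((j - m + 1 : ℕ):ℝ) = (j:ℝ) - (m:ℝ) + 1 := by
              push_cast [Nat.cast_sub hmj]; ring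
            rw [hc]
            have : 2*(m:ℝ) ≤ (j:ℝ) := by exact_mod_cast hj
            linarith
          have hfm : (Nat.factorial m : ℝ) ≤ (m:ℝ)^m := by
            exact_mod_cast Nat.factorial_le_pow m
          have hC0 : (0:ℝ) ≤ (Nat.choose j m : ℝ) := by positivity
          calc (j:ℝ)^m = 2^m * ((j:ℝ)/2)^m := by
                rw [← mul_pow]; congr 1; ring
            _ ≤ 2^m * (((j - m + 1 : ℕ):ℝ))^m := by
                apply mul_le_mul_of_nonneg_left _ (by positivity)
                exact pow_le_pow_left₀ (by positivity) hhalf m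
            _ ≤ 2^m * ((Nat.choose j m : ℝ) * (m:ℝ)^m) := by
                apply mul_le_mul_of_nonneg_left _ (by positivity)
                calc ((j - m + 1 : ℕ):ℝ)^m ≤ (Nat.choose j m : ℝ) * (Nat.factorial m : ℝ) := hcast
                  _ ≤ (Nat.choose j m : ℝ) * (m:ℝ)^m := by
                      apply mul_le_mul_of_nonneg_left hfm hC0
            _ = (2*(m:ℝ))^m * (Nat.choose j m : ℝ) := by
                rw [mul_pow]; ring
        -- core bound
        have hcore : (j:ℝ)^m * (1-r)^m * r^j ≤ (2*(m:ℝ))^m := by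
          have h1ru : 1 - r ≤ u := by
            rw [hu]
            calc 1 - r = (1-r)/1 := by ring
              _ ≤ (1-r)/r := div_le_div_of_nonneg_left h1r0.le hr0 hr1.le
          have hs1 : (1-r)^m ≤ u^m := pow_le_pow_left₀ h1r0.le h1ru m
          calc (j:ℝ)^m * (1-r)^m * r^j
              ≤ ((2*(m:ℝ))^m * (Nat.choose j m : ℝ)) * u^m * r^j := by
                apply mul_le_mul_of_nonneg_right _ (by positivity)
                apply mul_le_mul hchoose hs1 (by positivity) (by positivity)
            _ = (2*(m:ℝ))^m * ((Nat.choose j m : ℝ) * (u^m * r^j)) := by ring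
            _ ≤ (2*(m:ℝ))^m * 1 := by
                apply mul_le_mul_of_nonneg_left hCur (by positivity)
            _ = (2*(m:ℝ))^m := by ring
        -- assemble
        have hj2 : ((j:ℝ)+1)^2 ≤ 4*(j:ℝ)^2 := by
          have : (1:ℝ) ≤ (j:ℝ) := by exact_mod_cast hj1
          nlinarith
        have h1rm : (1-r)^(2*n+1) ≤ (1-r)^m := by
          apply pow_le_pow_of_le_one h1r0.le (by linarith) (by omega)
        calc (j:ℝ)^n * r^j * ((j:ℝ)+1)^2 * (1-r)^(2*n+1)
            ≤ (j:ℝ)^n * r^j * (4*(j:ℝ)^2) * (1-r)^m := by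
              apply mul_le_mul (mul_le_mul_of_nonneg_left hj2 (by positivity)) h1rm
                (by positivity) (by positivity)
          _ = 4 * ((j:ℝ)^m * (1-r)^m * r^j) := by
              rw [hm, pow_add]; ring
          _ ≤ 4 * (2*(m:ℝ))^m := by linarith [hcore]
          _ = 4*(2*(m:ℝ))^m := by ring
    have hBsum : Summable (fun j : ℕ => (4*(2*m:ℝ)^m / (1-r)^(2*n+1)) * (1/((j:ℝ)+1)^2)) :=
      hP.mul_left _
    have hsum : Summable (fun j : ℕ => (j:ℝ)^n * r^j) :=
      Summable.of_nonneg_of_le (fun j => by positivity) hpt hBsum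
    refine ⟨hsum, ?_⟩
    calc ∑' j : ℕ, (j:ℝ)^n * r^j
        ≤ ∑' j : ℕ, (4*(2*m:ℝ)^m / (1-r)^(2*n+1)) * (1/((j:ℝ)+1)^2) :=
          Summable.tsum_le_tsum hpt hsum hBsum
      _ = (4*(2*m:ℝ)^m / (1-r)^(2*n+1)) * P := by
          rw [tsum_mul_left]
      _ = 4*(2*m:ℝ)^m * P / (1-r)^(2*n+1) := by ring

end TailAux

open TailAux

/-- For every natural `n` there are constants `C > 0`, `λ₀ > 0` such that for all
`λ ≥ λ₀`, the tail sum over naturals `l > λ − √λ` satisfies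
`∑_{l > λ−√λ} l^n/D_λ(l) ≤ C·λ^n`. -/
theorem tail_sum_bound (n : ℕ) :
    ∃ C > (0 : ℝ), ∃ lam₀ > (0 : ℝ), ∀ lam : ℝ, lam₀ ≤ lam →
      (∑' l : ℕ, if lam - Real.sqrt lam < (l : ℝ) then (l : ℝ) ^ n / D lam l else 0)
        ≤ C * lam ^ n := by
  obtain ⟨K, hK0, hKs⟩ := sum_pow_geom n
  refine ⟨Real.exp 7 * 2^(n+1) + Real.exp 7 * 2^(3*n+1) * K,
    by positivity, 100, by norm_num, ?_⟩
  intro lam hlam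
  obtain ⟨hs10, hss⟩ := sqrt_facts hlam
  set s := Real.sqrt lam with hsdef
  have hs0 : 0 < s := by linarith
  have hlam0 : 0 < lam := by linarith
  set M := ⌈lam + s⌉₊ with hM
  set l₁ := ⌈lam - s⌉₊ with hl₁
  set r := lam / (lam + s) with hr
  have hr0 : 0 < r := by positivity
  have hr1 : r < 1 := by rw [hr, div_lt_one (by linarith)]; linarith
  have hl₁M : l₁ ≤ M := Nat.ceil_le_ceil (by linarith)
  have hMge : lam + s ≤ (M:ℝ) := Nat.le_ceil _
  have hMlt : (M:ℝ) < lam + s + 1 := Nat.ceil_lt_add_one (by linarith)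
  have hl₁ge : lam - s ≤ (l₁:ℝ) := Nat.le_ceil _
  have hlams : s ≤ lam - s := by nlinarith
  have hl₁lt : (l₁:ℝ) < lam - s + 1 := Nat.ceil_lt_add_one (by linarith)
  set f : ℕ → ℝ := fun l => if lam - s < (l:ℝ) then (l:ℝ)^n / D lam l else 0 with hf
  set g : ℕ → ℝ :=
    fun l => if l < l₁ then 0 else (Real.exp 4 / s) * (l:ℝ)^n * r ^ (l - M) with hg
  have hg0 : ∀ l, 0 ≤ g l := by
    intro l
    rw [hg]; dsimp only
    split
    · exact le_refl 0
    · positivity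
  have hf0 : ∀ l, 0 ≤ f l := by
    intro l
    rw [hf]; dsimp only
    split
    · exact div_nonneg (by positivity) (D_pos hlam0 l).le
    · exact le_refl 0
  have hfg : ∀ l, f l ≤ g l := by
    intro l
    rw [hf, hg]; dsimp only
    split_ifs with h1 h2
    · exact absurd (Nat.lt_ceil.mp h2) (by linarith)
    · have hkey := key hlam (l := l) (by rw [← hsdef]; exact h1)
      rw [← hsdef, ← hM, ← hr] at hkey
      calc (l:ℝ)^n / D lam l = (l:ℝ)^n * (1 / D lam l) := by ring
        _ ≤ (l:ℝ)^n * ((Real.exp 4 / s) * r ^ (l - M)) :=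
            mul_le_mul_of_nonneg_left hkey (by positivity)
        _ = (Real.exp 4 / s) * (l:ℝ)^n * r ^ (l - M) := by ring
    · exact le_refl 0
    · positivity
  -- shifted bound
  set c1 := (Real.exp 7 / s) * 2^n * (l₁:ℝ)^n with hc1
  set c2 := (Real.exp 7 / s) * 2^n with hc2
  have hshift2 : ∀ j : ℕ, g (j + l₁) ≤ c1 * r^j + c2 * ((j:ℝ)^n * r^j) := by
    intro j
    have hnotlt : ¬ (j + l₁ < l₁) := by omega
    rw [hg]; dsimp only
    rw [if_neg hnotlt]
    have hexp : (j + l₁) - M = j - (M - l₁) := by omega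
    -- r ^ (j - (M - l₁)) ≤ exp 3 * r ^ j
    have hrm : r ^ (j - (M - l₁)) ≤ Real.exp 3 * r ^ j := by
      have ha : r ^ (j - (M - l₁)) * r ^ (M - l₁) ≤ r ^ j := by
        rw [← pow_add]
        exact pow_le_pow_of_le_one hr0.le hr1.le (by omega)
      have hb : r ^ (j - (M - l₁)) ≤ r ^ j / r ^ (M - l₁) :=
        (le_div_iff₀ (pow_pos hr0 _)).mpr ha
      have hinv : 1 / r = 1 + 1/s := by
        rw [hr, one_div_div]
        field_simp
        nlinarith
      have hm₁ : ((M - l₁ : ℕ):ℝ) ≤ 3 * s := by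
        have : ((M - l₁ : ℕ):ℝ) = (M:ℝ) - (l₁:ℝ) := by
          rw [Nat.cast_sub hl₁M]
        rw [this]
        linarith
      have hc : (1/r) ^ (M - l₁) ≤ Real.exp 3 := by
        calc (1/r) ^ (M - l₁) = (1 + 1/s) ^ (M - l₁) := by rw [hinv]
          _ ≤ Real.exp (1/s) ^ (M - l₁) := by
              apply pow_le_pow_left₀ (by positivity)
              have := Real.add_one_le_exp (1/s)
              linarith
          _ = Real.exp (((M - l₁ : ℕ):ℝ) * (1/s)) := by rw [Real.exp_nat_mul]
          _ ≤ Real.exp 3 := by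
              apply Real.exp_le_exp.mpr
              rw [mul_one_div, div_le_iff₀ hs0]
              nlinarith
      calc r ^ (j - (M - l₁)) ≤ r ^ j / r ^ (M - l₁) := hb
        _ = r ^ j * (1/r) ^ (M - l₁) := by
            rw [one_div, inv_pow, div_eq_mul_inv]
        _ ≤ r ^ j * Real.exp 3 := mul_le_mul_of_nonneg_left hc (by positivity)
        _ = Real.exp 3 * r ^ j := by ring
    have hsplit : (((j + l₁ : ℕ)):ℝ)^n ≤ 2^n * ((l₁:ℝ)^n + (j:ℝ)^n) := by
      have hcast : (((j + l₁ : ℕ)):ℝ) = (l₁:ℝ) + (j:ℝ) := by push_cast; ring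
      rw [hcast]
      calc ((l₁:ℝ) + (j:ℝ))^n ≤ 2^(n-1) * ((l₁:ℝ)^n + (j:ℝ)^n) :=
            add_pow_le (by positivity) (by positivity) n
        _ ≤ 2^n * ((l₁:ℝ)^n + (j:ℝ)^n) := by
            apply mul_le_mul_of_nonneg_right _ (by positivity)
            exact pow_le_pow_right₀ one_le_two (by omega)
    have he47 : Real.exp 4 * Real.exp 3 = Real.exp 7 := by
      rw [← Real.exp_add]; norm_num
    calc (Real.exp 4 / s) * (((j + l₁ : ℕ)):ℝ)^n * r ^ ((j + l₁) - M)
        ≤ (Real.exp 4 / s) * (((j + l₁ : ℕ)):ℝ)^n * (Real.exp 3 * r ^ j) := by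
          rw [hexp]
          exact mul_le_mul_of_nonneg_left hrm (by positivity)
      _ = (Real.exp 7 / s) * ((((j + l₁ : ℕ)):ℝ)^n * r ^ j) := by
          rw [← he47]; ring
      _ ≤ (Real.exp 7 / s) * ((2^n * ((l₁:ℝ)^n + (j:ℝ)^n)) * r ^ j) := by
          apply mul_le_mul_of_nonneg_left _ (by positivity)
          exact mul_le_mul_of_nonneg_right hsplit (by positivity)
      _ = c1 * r^j + c2 * ((j:ℝ)^n * r^j) := by
          rw [hc1, hc2]; ring
  -- summability
  have hgeo : Summable (fun j : ℕ => r^j) := summable_geometric_of_lt_one hr0.le hr1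
  have hpows := (hKs r hr0 hr1).1
  have hh2sum : Summable (fun j : ℕ => c1 * r^j + c2 * ((j:ℝ)^n * r^j)) :=
    (hgeo.mul_left c1).add (hpows.mul_left c2)
  have hgshift : Summable (fun j : ℕ => g (j + l₁)) :=
    Summable.of_nonneg_of_le (fun j => hg0 _) hshift2 hh2sum
  have hgsum : Summable g := (summable_nat_add_iff l₁).mp hgshift
  have hfsum : Summable f := Summable.of_nonneg_of_le hf0 hfg hgsum
  -- tsum bound
  have h1mr : 1 - r = 1/(s+1) := by
    have ha : 1 - r = s/(lam+s) := by
      rw [hr]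
      field_simp
      ring
    rw [ha, div_eq_div_iff (by linarith) (by linarith)]
    nlinarith
  have htsum_geo : ∑' j : ℕ, r^j = s + 1 := by
    rw [tsum_geometric_of_lt_one hr0.le hr1, h1mr]
    rw [one_div, inv_inv]
  have htsum_pow : ∑' j : ℕ, (j:ℝ)^n * r^j ≤ K * (s+1)^(2*n+1) := by
    have := (hKs r hr0 hr1).2
    rw [h1mr] at this
    calc ∑' j : ℕ, (j:ℝ)^n * r^j ≤ K / (1/(s+1))^(2*n+1) := this
      _ = K * (s+1)^(2*n+1) := by
          rw [div_pow, one_pow, div_div_eq_mul_div, div_one]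
  -- assemble the tsum chain
  have hchain : ∑' l, f l ≤ c1 * (s+1) + c2 * (K * (s+1)^(2*n+1)) := by
    have e1 : ∑' l, f l ≤ ∑' l, g l := Summable.tsum_le_tsum hfg hfsum hgsum
    have e2 : ∑' l, g l = ∑ i ∈ Finset.range l₁, g i + ∑' j, g (j + l₁) :=
      (Summable.sum_add_tsum_nat_add l₁ hgsum).symm
    have e3 : ∑ i ∈ Finset.range l₁, g i = 0 := by
      apply Finset.sum_eq_zero
      intro i hi
      rw [hg]; dsimp only
      rw [if_pos (Finset.mem_range.mp hi)]
    have e4 : ∑' j, g (j + l₁) ≤ ∑' j : ℕ, (c1 * r^j + c2 * ((j:ℝ)^n * r^j)) :=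
      Summable.tsum_le_tsum hshift2 hgshift hh2sum
    have e5 : ∑' j : ℕ, (c1 * r^j + c2 * ((j:ℝ)^n * r^j))
        = c1 * (s+1) + c2 * (∑' j : ℕ, (j:ℝ)^n * r^j) := by
      rw [Summable.tsum_add (hgeo.mul_left c1) (hpows.mul_left c2), tsum_mul_left, tsum_mul_left,
        htsum_geo]
    have e6 : c2 * (∑' j : ℕ, (j:ℝ)^n * r^j) ≤ c2 * (K * (s+1)^(2*n+1)) := by
      apply mul_le_mul_of_nonneg_left htsum_pow
      rw [hc2]; positivity
    linarith [e1, e4]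
  refine hchain.trans ?_
  -- final arithmetic
  have hl₁lam : (l₁:ℝ) ≤ lam := by linarith
  have hl₁n : (l₁:ℝ)^n ≤ lam^n := pow_le_pow_left₀ (by positivity) hl₁lam n
  have hsplus : s + 1 ≤ 2*s := by linarith
  have bound1 : c1 * (s+1) ≤ Real.exp 7 * 2^(n+1) * lam^n := by
    have ha : c1 * (s+1) ≤ c1 * (2*s) := by
      apply mul_le_mul_of_nonneg_left hsplus
      rw [hc1]; positivity
    have hb : c1 * (2*s) = Real.exp 7 * 2^(n+1) * (l₁:ℝ)^n := by
      rw [hc1, hc2]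
      field_simp
      ring
    refine ha.trans ?_
    rw [hb]
    apply mul_le_mul_of_nonneg_left hl₁n (by positivity)
  have bound2 : c2 * (K * (s+1)^(2*n+1)) ≤ Real.exp 7 * 2^(3*n+1) * K * lam^n := by
    have ha : (s+1)^(2*n+1) ≤ 2^(2*n+1) * s^(2*n+1) := by
      calc (s+1)^(2*n+1) ≤ (2*s)^(2*n+1) :=
            pow_le_pow_left₀ (by linarith) hsplus _
        _ = 2^(2*n+1) * s^(2*n+1) := mul_pow 2 s (2*n+1)
    have hsn : s^(2*n+1) = s * lam^n := by
      have h1 : s^(2*n+1) = (s^2)^n * s := by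
        rw [← pow_mul, ← pow_succ]
      rw [h1, Real.sq_sqrt hlam0.le]
      ring
    have hb : c2 * (K * (2^(2*n+1) * s^(2*n+1))) = Real.exp 7 * 2^(3*n+1) * K * lam^n := by
      rw [hc2, hsn]
      have h2 : (2:ℝ)^(3*n+1) = 2^n * 2^(2*n+1) := by
        rw [← pow_add]; congr 1; omega
      rw [h2]
      field_simp
    calc c2 * (K * (s+1)^(2*n+1)) ≤ c2 * (K * (2^(2*n+1) * s^(2*n+1))) := by
          apply mul_le_mul_of_nonneg_left _ (by rw [hc2]; positivity)
          exact mul_le_mul_of_nonneg_left ha hK0.le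
      _ = Real.exp 7 * 2^(3*n+1) * K * lam^n := hb
  calc c1 * (s+1) + c2 * (K * (s+1)^(2*n+1))
      ≤ Real.exp 7 * 2^(n+1) * lam^n + Real.exp 7 * 2^(3*n+1) * K * lam^n := by
        linarith [bound1, bound2]
    _ = (Real.exp 7 * 2^(n+1) + Real.exp 7 * 2^(3*n+1) * K) * lam^n := by ring
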